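/- arXiv:1209.4766 — 3 statements merged into one kernel-verified Lean document; each statement's English description precedes it below -/
import Mathlib

section
/- The set 𝓒 is linear: if φ, ψ ∈ 𝓒 and a, b ∈ ℝ, then aφ + bψ ∈ 𝓒. -/
open MeasureTheory Filter Topology

noncomputable section

namespace Mosco

variable {E : Type*} [MeasurableSpace E]

/-- The inner product of two real-valued functions with respect to a measure,
`⟨φ, ψ⟩ = ∫ φ ψ dμ`. -/
def ip (μ : Measure E) (φ ψ : E → ℝ) : ℝ := ∫ x, φ x * ψ x ∂μ

/-- The framework of Section 2.1: mutually singular probability measures `ν n`, `n : ℕ`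
(`ν 0` playing the role of the limit measure `ν`), such that `L²(E, ν 0)` is separable,
together with disjoint sets `En n` carrying `ν n`, and a linear subset `F = 𝓕 ⊆ 𝓓`
which is dense in `L²(E, ν 0)`. -/
structure Frame (E : Type*) [MeasurableSpace E] where
  ν : ℕ → Measure E
  prob : ∀ n, IsProbabilityMeasure (ν n)
  singular : ∀ m n, m ≠ n → (ν m).MutuallySingular (ν n)
  separableL2 : TopologicalSpace.SeparableSpace (Lp ℝ 2 (ν 0))
  En : ℕ → Set E
  measEn : ∀ n, MeasurableSet (En n)
  disjEn : ∀ m n, m ≠ n → Disjoint (En m) (En n)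
  nullEn : ∀ n, ν n (En n)ᶜ = 0
  F : Set (E → ℝ)
  F_measurable : ∀ φ ∈ F, Measurable φ
  F_memL2 : ∀ φ ∈ F, ∀ n, MemLp φ 2 (ν n)
  F_tendsto : ∀ φ ∈ F, Tendsto (fun n => ip (ν n) φ φ) atTop (𝓝 (ip (ν 0) φ φ))
  F_linear : ∀ φ ∈ F, ∀ ψ ∈ F, ∀ a b : ℝ, (fun x => a * φ x + b * ψ x) ∈ F
  F_dense : ∀ f : E → ℝ, Measurable f → MemLp f 2 (ν 0) → ∀ ε : ℝ, 0 < ε →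
    ∃ φ ∈ F, ip (ν 0) (fun x => f x - φ x) (fun x => f x - φ x) < ε

/-- The set `𝓓`: everywhere defined measurable functions lying in every `L²(E, ν n)`
whose `ν n`-norms converge to the `ν 0`-norm. -/
def Frame.D (fr : Frame E) : Set (E → ℝ) :=
  {φ | Measurable φ ∧ (∀ n, MemLp φ 2 (fr.ν n)) ∧
    Tendsto (fun n => ip (fr.ν n) φ φ) atTop (𝓝 (ip (fr.ν 0) φ φ))}

/-- The set `𝓒`: elements of `𝓓` satisfying conditions (c1) and (c2). -/
def Frame.C (fr : Frame E) : Set (E → ℝ) :=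
  {φ | φ ∈ fr.D ∧ (∀ n, 1 ≤ n → ∃ g ∈ fr.F, φ =ᵐ[fr.ν n] g) ∧
    ∀ ψ ∈ fr.F, Tendsto (fun n => ip (fr.ν n) φ ψ) atTop (𝓝 (ip (fr.ν 0) φ ψ))}

/-- The set `𝓥` of multipliers mapping `𝓓` into `𝓓` and `𝓕` into `𝓕`. -/
def Frame.V (fr : Frame E) : Set (E → ℝ) :=
  {ψ | Measurable ψ ∧ (∀ n, MemLp ψ 2 (fr.ν n)) ∧
    (∀ σ ∈ fr.D, (fun x => σ x * ψ x) ∈ fr.D) ∧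
    (∀ τ ∈ fr.F, (fun x => τ x * ψ x) ∈ fr.F)}

/-- `w`-convergence of a sequence `φs` (with `φs n` regarded as an element of
`L²(E, ν n)`) to `φ ∈ L²(E, ν 0)`. -/
def Frame.WConv (fr : Frame E) (φs : ℕ → E → ℝ) (φ : E → ℝ) : Prop :=
  ∀ ψ ∈ fr.C, Tendsto (fun n => ip (fr.ν n) (φs n) ψ) atTop (𝓝 (ip (fr.ν 0) φ ψ))

/-- `s`-convergence: `w`-convergence together with convergence of the norms. -/
def Frame.SConv (fr : Frame E) (φs : ℕ → E → ℝ) (φ : E → ℝ) : Prop :=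
  fr.WConv φs φ ∧
  Tendsto (fun n => ip (fr.ν n) (φs n) (φs n)) atTop (𝓝 (ip (fr.ν 0) φ φ))


section Helpers

variable {μ : Measure E} {f g h : E → ℝ}

lemma integrable_mul2 (hf : MemLp f 2 μ) (hg : MemLp g 2 μ) :
    Integrable (fun x => f x * g x) μ := by
  rw [← memLp_one_iff_integrable]
  have h12 : (1 : ENNReal) / 1 = 1 / 2 + 1 / 2 := by
    rw [ENNReal.add_halves]; norm_num
  exact hg.smul (r := 1) hf

lemma ip_nonneg : 0 ≤ ip μ f f := integral_nonneg fun x => mul_self_nonneg _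

lemma ip_comm : ip μ f g = ip μ g f :=
  integral_congr_ae (Filter.Eventually.of_forall fun x => mul_comm _ _)

lemma abs_ip_le (hf : MemLp f 2 μ) (hg : MemLp g 2 μ) :
    |ip μ f g| ≤ Real.sqrt (ip μ f f) * Real.sqrt (ip μ g g) := by
  have key : ∀ (f' g' : E → ℝ) (hf' : MemLp f' 2 μ) (hg' : MemLp g' 2 μ),
      ip μ f' g' = @inner ℝ _ _ (hf'.toLp f') (hg'.toLp g') := by
    intro f' g' hf' hg'
    rw [L2.inner_def]
    refine integral_congr_ae ?_
    filter_upwards [hf'.coeFn_toLp, hg'.coeFn_toLp] with x hx hy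
    simp [hx, hy, RCLike.inner_apply, starRingEnd_apply, mul_comm]
  have h2 : Real.sqrt (ip μ f f) = ‖hf.toLp f‖ := by
    rw [key f f hf hf, real_inner_self_eq_norm_sq, Real.sqrt_sq (norm_nonneg _)]
  have h3 : Real.sqrt (ip μ g g) = ‖hg.toLp g‖ := by
    rw [key g g hg hg, real_inner_self_eq_norm_sq, Real.sqrt_sq (norm_nonneg _)]
  rw [key f g hf hg, h2, h3]
  exact abs_real_inner_le_norm _ _

lemma ip_lin_left (hf : MemLp f 2 μ) (hg : MemLp g 2 μ) (hh : MemLp h 2 μ) (a b : ℝ) :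
    ip μ (fun x => a * f x + b * g x) h = a * ip μ f h + b * ip μ g h := by
  unfold ip
  have e : ∀ x, (a * f x + b * g x) * h x = a * (f x * h x) + b * (g x * h x) :=
    fun x => by ring
  simp_rw [e]
  rw [integral_add ((integrable_mul2 hf hh).const_mul a)
      ((integrable_mul2 hg hh).const_mul b), integral_const_mul, integral_const_mul]

lemma ip_sub_right (hf : MemLp f 2 μ) (hg : MemLp g 2 μ) (hh : MemLp h 2 μ) :
    ip μ f (fun x => g x - h x) = ip μ f g - ip μ f h := by
  unfold ip
  have e : ∀ x, f x * (g x - h x) = f x * g x - f x * h x := fun x => by ring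
  simp_rw [e]
  exact integral_sub (integrable_mul2 hf hg) (integrable_mul2 hf hh)

lemma ip_sub_sub (hg : MemLp g 2 μ) (hh : MemLp h 2 μ) :
    ip μ (fun x => g x - h x) (fun x => g x - h x)
      = ip μ g g - 2 * ip μ g h + ip μ h h := by
  unfold ip
  have e : ∀ x, (g x - h x) * (g x - h x)
      = g x * g x - 2 * (g x * h x) + h x * h x := fun x => by ring
  simp_rw [e]
  have i1 : Integrable (fun x => g x * g x - 2 * (g x * h x)) μ :=
    (integrable_mul2 hg hg).sub ((integrable_mul2 hg hh).const_mul 2)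
  rw [integral_add i1 (integrable_mul2 hh hh),
    integral_sub (integrable_mul2 hg hg) ((integrable_mul2 hg hh).const_mul 2),
    integral_const_mul]

end Helpers

/-- For `φ, ψ ∈ 𝓒`, `⟨φ, ψ⟩ₙ → ⟨φ, ψ⟩`. -/
lemma C_ip_tendsto (fr : Frame E) {φ ψ : E → ℝ} (hφ : φ ∈ fr.C) (hψ : ψ ∈ fr.C) :
    Tendsto (fun n => ip (fr.ν n) φ ψ) atTop (𝓝 (ip (fr.ν 0) φ ψ)) := by
  obtain ⟨⟨hφm, hφL, hφT⟩, hφ1, hφ2⟩ := hφ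
  obtain ⟨⟨hψm, hψL, hψT⟩, hψ1, hψ2⟩ := hψ
  rw [Metric.tendsto_atTop]
  intro ε hε
  obtain ⟨M, hM⟩ := hφT.bddAbove_range
  set C : ℝ := Real.sqrt M + 1 with hC
  have hM0 : ∀ n, ip (fr.ν n) φ φ ≤ M := fun n => hM ⟨n, rfl⟩
  have hCpos : 0 < C := by positivity
  have hsq : ∀ n, Real.sqrt (ip (fr.ν n) φ φ) ≤ C := fun n => by
    have h1 : Real.sqrt (ip (fr.ν n) φ φ) ≤ Real.sqrt M := Real.sqrt_le_sqrt (hM0 n)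
    have h2 : Real.sqrt M ≤ C := by rw [hC]; linarith
    linarith
  set δ : ℝ := (ε / (3 * C)) ^ 2 with hδ
  have hδpos : 0 < δ := by positivity
  have hsqrtδ : Real.sqrt δ = ε / (3 * C) := Real.sqrt_sq (by positivity)
  have hCδ : C * Real.sqrt δ = ε / 3 := by
    rw [hsqrtδ]; field_simp
  obtain ⟨χ, hχF, hχ⟩ := fr.F_dense ψ hψm (hψL 0) δ hδpos
  have hχL := fr.F_memL2 χ hχF
  have hDlim : Tendsto (fun n => ip (fr.ν n) (fun x => ψ x - χ x) (fun x => ψ x - χ x)) atTop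
      (𝓝 (ip (fr.ν 0) (fun x => ψ x - χ x) (fun x => ψ x - χ x))) := by
    have e : ∀ n, ip (fr.ν n) (fun x => ψ x - χ x) (fun x => ψ x - χ x)
        = ip (fr.ν n) ψ ψ - 2 * ip (fr.ν n) ψ χ + ip (fr.ν n) χ χ :=
      fun n => ip_sub_sub (hψL n) (hχL n)
    simp_rw [e]
    exact (hψT.sub ((hψ2 χ hχF).const_mul 2)).add (fr.F_tendsto χ hχF)
  have hev : ∀ᶠ n in atTop,
      ip (fr.ν n) (fun x => ψ x - χ x) (fun x => ψ x - χ x) < δ :=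
    hDlim.eventually_lt_const hχ
  have h2ev : ∀ᶠ n in atTop, |ip (fr.ν n) φ χ - ip (fr.ν 0) φ χ| < ε / 3 := by
    have hh := ((hφ2 χ hχF).sub (tendsto_const_nhds (x := ip (fr.ν 0) φ χ))).abs
    rw [sub_self, abs_zero] at hh
    exact hh.eventually_lt_const (by positivity)
  obtain ⟨N, hN⟩ := eventually_atTop.mp (hev.and h2ev)
  refine ⟨N, fun n hn => ?_⟩
  obtain ⟨hD, h2⟩ := hN n hn
  rw [Real.dist_eq]
  have key : ip (fr.ν n) φ ψ - ip (fr.ν 0) φ ψ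
      = ip (fr.ν n) φ (fun x => ψ x - χ x) + (ip (fr.ν n) φ χ - ip (fr.ν 0) φ χ)
        - ip (fr.ν 0) φ (fun x => ψ x - χ x) := by
    rw [ip_sub_right (hφL n) (hψL n) (hχL n), ip_sub_right (hφL 0) (hψL 0) (hχL 0)]
    ring
  have b1 : |ip (fr.ν n) φ (fun x => ψ x - χ x)| < ε / 3 := by
    have c1 : |ip (fr.ν n) φ (fun x => ψ x - χ x)|
        ≤ Real.sqrt (ip (fr.ν n) φ φ)
          * Real.sqrt (ip (fr.ν n) (fun x => ψ x - χ x) (fun x => ψ x - χ x)) :=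
      abs_ip_le (hφL n) ((hψL n).sub (hχL n))
    have c2 : Real.sqrt (ip (fr.ν n) φ φ)
        * Real.sqrt (ip (fr.ν n) (fun x => ψ x - χ x) (fun x => ψ x - χ x))
        ≤ C * Real.sqrt (ip (fr.ν n) (fun x => ψ x - χ x) (fun x => ψ x - χ x)) :=
      mul_le_mul_of_nonneg_right (hsq n) (Real.sqrt_nonneg _)
    have c3 : C * Real.sqrt (ip (fr.ν n) (fun x => ψ x - χ x) (fun x => ψ x - χ x))
        < C * Real.sqrt δ :=
      mul_lt_mul_of_pos_left (Real.sqrt_lt_sqrt ip_nonneg hD) hCpos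
    rw [hCδ] at c3
    exact lt_of_le_of_lt (c1.trans c2) c3
  have b3 : |ip (fr.ν 0) φ (fun x => ψ x - χ x)| < ε / 3 := by
    have c1 : |ip (fr.ν 0) φ (fun x => ψ x - χ x)|
        ≤ Real.sqrt (ip (fr.ν 0) φ φ)
          * Real.sqrt (ip (fr.ν 0) (fun x => ψ x - χ x) (fun x => ψ x - χ x)) :=
      abs_ip_le (hφL 0) ((hψL 0).sub (hχL 0))
    have c2 : Real.sqrt (ip (fr.ν 0) φ φ)
        * Real.sqrt (ip (fr.ν 0) (fun x => ψ x - χ x) (fun x => ψ x - χ x))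
        ≤ C * Real.sqrt (ip (fr.ν 0) (fun x => ψ x - χ x) (fun x => ψ x - χ x)) :=
      mul_le_mul_of_nonneg_right (hsq 0) (Real.sqrt_nonneg _)
    have c3 : C * Real.sqrt (ip (fr.ν 0) (fun x => ψ x - χ x) (fun x => ψ x - χ x))
        < C * Real.sqrt δ :=
      mul_lt_mul_of_pos_left (Real.sqrt_lt_sqrt ip_nonneg hχ) hCpos
    rw [hCδ] at c3
    exact lt_of_le_of_lt (c1.trans c2) c3
  rw [key]
  set A := ip (fr.ν n) φ (fun x => ψ x - χ x)
  set B := ip (fr.ν n) φ χ - ip (fr.ν 0) φ χ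
  set Cc := ip (fr.ν 0) φ (fun x => ψ x - χ x)
  have htri : |A + B - Cc| ≤ |A| + |B| + |Cc| := by
    calc |A + B - Cc| ≤ |A + B| + |Cc| := abs_sub _ _
      _ ≤ |A| + |B| + |Cc| := by linarith [abs_add_le A B]
  linarith

/-- Lemma 2.1 (b): the set `𝓒` is linear: if `φ, ψ ∈ 𝓒` and `a, b ∈ ℝ`,
then `a • φ + b • ψ ∈ 𝓒`. -/
theorem C_linear (fr : Frame E) {φ ψ : E → ℝ} (hφ : φ ∈ fr.C) (hψ : ψ ∈ fr.C) (a b : ℝ) :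
    (fun x => a * φ x + b * ψ x) ∈ fr.C := by
  have hφ' := hφ
  have hψ' := hψ
  obtain ⟨⟨hφm, hφL, hφT⟩, hφ1, hφ2⟩ := hφ
  obtain ⟨⟨hψm, hψL, hψT⟩, hψ1, hψ2⟩ := hψ
  have hL : ∀ n, MemLp (fun x => a * φ x + b * ψ x) 2 (fr.ν n) :=
    fun n => ((hφL n).const_mul a).add ((hψL n).const_mul b)
  have hT2 := C_ip_tendsto fr hφ' hψ'
  refine ⟨⟨(hφm.const_mul a).add (hψm.const_mul b), hL, ?_⟩, ?_, ?_⟩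
  · have h1 : ∀ n, ip (fr.ν n) φ (fun x => a * φ x + b * ψ x)
        = a * ip (fr.ν n) φ φ + b * ip (fr.ν n) φ ψ := fun n => by
      rw [ip_comm (μ := fr.ν n), ip_lin_left (hφL n) (hψL n) (hφL n),
        show ip (fr.ν n) ψ φ = ip (fr.ν n) φ ψ from ip_comm]
    have h2 : ∀ n, ip (fr.ν n) ψ (fun x => a * φ x + b * ψ x)
        = a * ip (fr.ν n) φ ψ + b * ip (fr.ν n) ψ ψ := fun n => by
      rw [ip_comm (μ := fr.ν n), ip_lin_left (hφL n) (hψL n) (hψL n),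
        show ip (fr.ν n) φ ψ = ip (fr.ν n) φ ψ from rfl]
    have e : ∀ n, ip (fr.ν n) (fun x => a * φ x + b * ψ x) (fun x => a * φ x + b * ψ x)
        = a * (a * ip (fr.ν n) φ φ + b * ip (fr.ν n) φ ψ)
          + b * (a * ip (fr.ν n) φ ψ + b * ip (fr.ν n) ψ ψ) := fun n => by
      rw [ip_lin_left (hφL n) (hψL n) (hL n), h1 n, h2 n]
    simp_rw [e]
    exact (((hφT.const_mul a).add (hT2.const_mul b)).const_mul a).add
      (((hT2.const_mul a).add (hψT.const_mul b)).const_mul b)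
  · intro n hn
    obtain ⟨g, hgF, hg⟩ := hφ1 n hn
    obtain ⟨h, hhF, hh⟩ := hψ1 n hn
    refine ⟨_, fr.F_linear g hgF h hhF a b, ?_⟩
    filter_upwards [hg, hh] with x hx hy
    simp [hx, hy]
  · intro χ hχF
    have e : ∀ n, ip (fr.ν n) (fun x => a * φ x + b * ψ x) χ
        = a * ip (fr.ν n) φ χ + b * ip (fr.ν n) ψ χ :=
      fun n => ip_lin_left (hφL n) (hψL n) (fr.F_memL2 χ hχF n) a b
    simp_rw [e]
    exact ((hφ2 χ hχF).const_mul a).add ((hψ2 χ hχF).const_mul b)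


end Mosco
end
end

section
/- The set 𝓒 is dense in L²(E, ν): every f ∈ L²(E, ν) is the limit in L²(E, ν) of the ν-equivalence classes of a sequence of elements of 𝓒. -/
open MeasureTheory Filter Topology

noncomputable section

namespace Mosco

variable {E : Type*} [MeasurableSpace E]

private lemma integrable_mul2_s1 {μ : Measure E} {φ ψ : E → ℝ}
    (hφ : MemLp φ 2 μ) (hψ : MemLp ψ 2 μ) :
    Integrable (fun x => φ x * ψ x) μ := by
  have h : MemLp (φ • ψ) 1 μ :=
    haveI : ENNReal.HolderTriple 2 2 1 := ⟨by rw [inv_one, ENNReal.inv_two_add_inv_two]⟩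
    hψ.smul hφ
  have := memLp_one_iff_integrable.mp h
  exact this

private lemma ip_polar (μ : Measure E) {φ ψ : E → ℝ}
    (hφ : MemLp φ 2 μ) (hψ : MemLp ψ 2 μ) :
    ip μ φ ψ = (ip μ (fun x => φ x + ψ x) (fun x => φ x + ψ x)
      - ip μ (fun x => φ x - ψ x) (fun x => φ x - ψ x)) / 4 := by
  have hs : MemLp (fun x => φ x + ψ x) 2 μ := hφ.add hψ
  have hd : MemLp (fun x => φ x - ψ x) 2 μ := hφ.sub hψ
  have hss : Integrable (fun x => (φ x + ψ x) * (φ x + ψ x)) μ := integrable_mul2_s1 hs hs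
  have hdd : Integrable (fun x => (φ x - ψ x) * (φ x - ψ x)) μ := integrable_mul2_s1 hd hd
  have h1 : ip μ (fun x => φ x + ψ x) (fun x => φ x + ψ x)
      - ip μ (fun x => φ x - ψ x) (fun x => φ x - ψ x)
      = ∫ x, ((φ x + ψ x) * (φ x + ψ x) - (φ x - ψ x) * (φ x - ψ x)) ∂μ := by
    rw [ip, ip, ← integral_sub hss hdd]
  have h2 : ∫ x, ((φ x + ψ x) * (φ x + ψ x) - (φ x - ψ x) * (φ x - ψ x)) ∂μ
      = ∫ x, 4 * (φ x * ψ x) ∂μ := by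
    congr 1; funext x; ring
  rw [ip, h1, h2, integral_const_mul]
  ring

private lemma F_subset_C (fr : Frame E) : fr.F ⊆ fr.C := by
  intro φ hφ
  have hφm := fr.F_measurable φ hφ
  have hφ2 := fr.F_memL2 φ hφ
  refine ⟨⟨hφm, hφ2, fr.F_tendsto φ hφ⟩, fun n _ => ⟨φ, hφ, ae_eq_refl _⟩, ?_⟩
  intro ψ hψ
  have hψ2 := fr.F_memL2 ψ hψ
  have hsF : (fun x => (1 : ℝ) * φ x + (1 : ℝ) * ψ x) ∈ fr.F :=
    fr.F_linear φ hφ ψ hψ 1 1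
  have hdF : (fun x => (1 : ℝ) * φ x + (-1 : ℝ) * ψ x) ∈ fr.F :=
    fr.F_linear φ hφ ψ hψ 1 (-1)
  have hseq : (fun x => (1 : ℝ) * φ x + (1 : ℝ) * ψ x) = fun x => φ x + ψ x := by
    funext x; ring
  have hdeq : (fun x => (1 : ℝ) * φ x + (-1 : ℝ) * ψ x) = fun x => φ x - ψ x := by
    funext x; ring
  rw [hseq] at hsF
  rw [hdeq] at hdF
  have hts := fr.F_tendsto _ hsF
  have htd := fr.F_tendsto _ hdF
  have key : ∀ n, ip (fr.ν n) φ ψ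
      = (ip (fr.ν n) (fun x => φ x + ψ x) (fun x => φ x + ψ x)
        - ip (fr.ν n) (fun x => φ x - ψ x) (fun x => φ x - ψ x)) / 4 :=
    fun n => ip_polar (fr.ν n) (hφ2 n) (fr.F_memL2 ψ hψ n)
  have : Tendsto (fun n => (ip (fr.ν n) (fun x => φ x + ψ x) (fun x => φ x + ψ x)
      - ip (fr.ν n) (fun x => φ x - ψ x) (fun x => φ x - ψ x)) / 4) atTop
      (𝓝 ((ip (fr.ν 0) (fun x => φ x + ψ x) (fun x => φ x + ψ x)
        - ip (fr.ν 0) (fun x => φ x - ψ x) (fun x => φ x - ψ x)) / 4)) :=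
    (hts.sub htd).div_const 4
  rw [key 0]
  simpa only [key] using this

/-- Lemma 2.1 (c): the set `𝓒` is dense in `L²(E, ν)`: every `f ∈ L²(E, ν)` is the
`L²(E, ν)`-limit of a sequence of elements of `𝓒`. -/
theorem C_dense (fr : Frame E) (f : E → ℝ) (hfm : Measurable f) (hf2 : MemLp f 2 (fr.ν 0)) :
    ∃ φs : ℕ → E → ℝ, (∀ k, φs k ∈ fr.C) ∧
      Tendsto (fun k => ip (fr.ν 0) (fun x => f x - φs k x) (fun x => f x - φs k x))
        atTop (𝓝 0) := by
  have H : ∀ k : ℕ, ∃ φ ∈ fr.F,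
      ip (fr.ν 0) (fun x => f x - φ x) (fun x => f x - φ x) < 1 / (k + 1) :=
    fun k => fr.F_dense f hfm hf2 (1 / (k + 1)) (by positivity)
  choose φs hφsF hφs using H
  refine ⟨φs, fun k => F_subset_C fr (hφsF k), ?_⟩
  have h0 : ∀ k, 0 ≤ ip (fr.ν 0) (fun x => f x - φs k x) (fun x => f x - φs k x) :=
    fun k => integral_nonneg fun x => mul_self_nonneg _
  refine squeeze_zero h0 (fun k => (hφs k).le) ?_
  exact tendsto_one_div_add_atTop_nhds_zero_nat

end Mosco
end
end

section
/- If φ ∈ 𝓒 and ψ ∈ 𝓥, then the pointwise product φψ belongs to 𝓒. -/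
open MeasureTheory Filter Topology

noncomputable section

namespace Mosco

variable {E : Type*} [MeasurableSpace E]

/-- Lemma 2.1 (e): if `φ ∈ 𝓒` and `ψ ∈ 𝓥`, then the pointwise product `φψ`
belongs to `𝓒`. -/
theorem mul_mem_C (fr : Frame E) {φ ψ : E → ℝ} (hφ : φ ∈ fr.C) (hψ : ψ ∈ fr.V) :
    (fun x => φ x * ψ x) ∈ fr.C := by
  obtain ⟨hφD, hc1, hc2⟩ := hφ
  obtain ⟨hψm, hψL2, hψD, hψF⟩ := hψ
  refine ⟨hψD φ hφD, ?_, ?_⟩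
  · intro n hn
    obtain ⟨g, hgF, hg⟩ := hc1 n hn
    refine ⟨fun x => g x * ψ x, hψF g hgF, ?_⟩
    filter_upwards [hg] with x hx
    simp [hx]
  · intro τ hτ
    have key : ∀ μ : Measure E, ip μ (fun x => φ x * ψ x) τ = ip μ φ (fun x => τ x * ψ x) := by
      intro μ
      unfold ip
      congr 1
      funext x
      ring
    simp only [key]
    exact hc2 _ (hψF τ hτ)


end Mosco
end
end
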